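/- Let S be a repeated suffix of T that is not the longest repeated suffix, and suppose every occurrence of S except the suffix occurrence is followed by the same character (i.e., there is a single character c with T[i+|S|] = c for all occurrences i < n−|S|+1 of S). Then the net frequency of S is zero. -/

import Mathlib

set_option linter.unusedSectionVars false

variable {α : Type*} [DecidableEq α]

/-- Number of occurrences of `S` as a substring of `T`. -/
def occ (T S : List α) : ℕ :=
  ((Finset.range T.length).filter (fun i => S <+: T.drop i)).card

/-- Net occurrence (with boundary conventions at the ends of the text). -/
def IsNetOcc (T S : List α) (i : ℕ) : Prop :=
  S <+: T.drop i ∧ i + S.length ≤ T.length ∧ 2 ≤ occ T S ∧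
    (i = 0 ∨ occ T ((T.drop (i - 1)).take (S.length + 1)) = 1) ∧
    (i + S.length = T.length ∨ occ T ((T.drop i).take (S.length + 1)) = 1)

instance (T S : List α) : DecidablePred (IsNetOcc T S) := fun i => by
  unfold IsNetOcc; infer_instance

/-- Net frequency: the number of net occurrences of `S` in `T`. -/
def netFreq (T S : List α) : ℕ :=
  ((Finset.range T.length).filter (IsNetOcc T S)).card

lemma occ_le_of_infix {T A B : List α} (h : A <:+: B) (hA : A ≠ []) :
    occ T B ≤ occ T A := by
  obtain ⟨X, Y, hXY⟩ := h
  unfold occ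
  apply Finset.card_le_card_of_injOn (fun j => j + X.length)
  · intro j hj
    rw [Finset.mem_coe, Finset.mem_filter, Finset.mem_range] at hj ⊢
    obtain ⟨hj1, Z, hZ⟩ := hj
    have hdrop : T.drop (j + X.length) = A ++ (Y ++ Z) := by
      rw [← List.drop_drop, ← hZ, ← hXY]
      rw [show X ++ A ++ Y ++ Z = X ++ (A ++ (Y ++ Z)) by simp [List.append_assoc]]
      exact List.drop_left
    constructor
    · have hBlen : B.length ≤ T.length - j := by
        have : B.length ≤ (T.drop j).length := List.IsPrefix.length_le ⟨Z, hZ⟩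
        simpa using this
      have hXA : X.length + A.length ≤ B.length := by
        have := congrArg List.length hXY; simp at this; omega
      have hApos : 0 < A.length := List.length_pos_iff.mpr hA
      beta_reduce; omega
    · exact ⟨Y ++ Z, hdrop.symm⟩
  · intro a _ b _ hab
    simpa using hab

lemma suffix_eq_of_length {T A B : List α} (hA : A <:+ T) (hB : B <:+ T)
    (h : A.length = B.length) : A = B := by
  obtain ⟨X, rfl⟩ := hA
  obtain ⟨Y, hY⟩ := hB
  have hlen : Y.length = X.length := by
    have := congrArg List.length hY; simp at this; omega
  have h2 := congrArg (List.drop X.length) hY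
  rw [List.drop_left, List.drop_left' hlen] at h2
  exact h2.symm

lemma suffix_suffix_of_length_le {T A B : List α} (hA : A <:+ T) (hB : B <:+ T)
    (h : A.length ≤ B.length) : A <:+ B := by
  have h1 : B.drop (B.length - A.length) <:+ T := (List.drop_suffix _ _).trans hB
  have h2 : A = B.drop (B.length - A.length) :=
    suffix_eq_of_length hA h1 (by simp [List.length_drop]; omega)
  rw [h2]; exact List.drop_suffix _ _

lemma prefix_append_singleton {T S : List α} {j : ℕ} {c : α}
    (h1 : S <+: T.drop j) (h2 : T[j + S.length]? = some c) :
    S ++ [c] <+: T.drop j := by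
  obtain ⟨Z, hZ⟩ := h1
  have hZ' : Z = T.drop (j + S.length) := by
    have := congrArg (List.drop S.length) hZ
    rw [List.drop_left, List.drop_drop] at this
    exact this
  obtain ⟨hlt, hget⟩ := List.getElem?_eq_some_iff.mp h2
  have hcons : Z = c :: T.drop (j + S.length + 1) := by
    rw [hZ', List.drop_eq_getElem_cons hlt, hget]
  exact ⟨T.drop (j + S.length + 1), by rw [← hZ, hcons]; simp⟩

theorem netFreq_eq_zero_of_not_branching_repeated_suffix (T S : List α)
    (hsuf : S <:+ T) (hrep : 2 ≤ occ T S)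
    (hnotlongest : ∃ S' : List α, S' <:+ T ∧ S.length < S'.length ∧ 2 ≤ occ T S')
    (hsame : ∃ c : α, ∀ i, S <+: T.drop i → i + S.length < T.length →
      T[i + S.length]? = some c) :
    netFreq T S = 0 := by
  obtain ⟨S', hS'suf, hlen, hS'rep⟩ := hnotlongest
  obtain ⟨c, hc⟩ := hsame
  rw [netFreq, Finset.card_eq_zero, Finset.filter_eq_empty_iff]
  intro i hi
  rw [Finset.mem_range] at hi
  rintro ⟨h1, h2, h3, h4, h5⟩
  have hS'len : S'.length ≤ T.length := hS'suf.length_le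
  by_cases hSnil : S = []
  · subst hSnil
    simp only [List.length_nil, Nat.add_zero] at h5 h2 hc
    rcases h5 with h5 | h5
    · omega
    · have hTi : T[i]? = some c := hc i (by simp) hi
      obtain ⟨hlt, hget⟩ := List.getElem?_eq_some_iff.mp hTi
      have htake : (T.drop i).take (0 + 1) = [c] := by
        rw [List.drop_eq_getElem_cons hi, hget]
        rfl
      rw [show (0:ℕ) + 1 = 0 + 1 from rfl] at h5
      rw [htake] at h5
      have hall : ∀ j ∈ Finset.range T.length, [c] <+: T.drop j := by
        intro j hj
        rw [Finset.mem_range] at hj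
        have hTj : T[j]? = some c := hc j (by simp) hj
        obtain ⟨hlt', hget'⟩ := List.getElem?_eq_some_iff.mp hTj
        exact ⟨T.drop (j+1), by rw [List.drop_eq_getElem_cons hlt', hget']; rfl⟩
      have hocc : occ T [c] = T.length := by
        unfold occ
        rw [Finset.filter_true_of_mem hall, Finset.card_range]
      have hocc0 : occ T ([] : List α) = T.length := by
        unfold occ
        rw [Finset.filter_true_of_mem (fun j _ => List.nil_prefix), Finset.card_range]
      omega
  · have hSpos : 0 < S.length := List.length_pos_iff.mpr hSnil
    set δ := S'.length - S.length with hδ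
    have hδpos : 1 ≤ δ := by omega
    set L := S'.drop (δ - 1) with hL
    have hLsufS' : L <:+ S' := List.drop_suffix _ _
    have hLsuf : L <:+ T := hLsufS'.trans hS'suf
    have hLlen : L.length = S.length + 1 := by
      rw [hL, List.length_drop]; omega
    have hLocc : 2 ≤ occ T L := by
      refine le_trans hS'rep (occ_le_of_infix hLsufS'.isInfix ?_)
      intro h; rw [h] at hLlen; simp at hLlen
    obtain ⟨X, hX⟩ := hsuf
    have hXlen : X.length = T.length - S.length := by
      have := congrArg List.length hX; simp at this; omega
    have hsufocc : S <+: T.drop (T.length - S.length) := by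
      rw [← hXlen, ← hX, List.drop_left]
    by_cases hI : i + S.length = T.length
    · have hi0 : i ≠ 0 := by omega
      rcases h4 with h4 | h4
      · exact hi0 h4
      · have hdl : (T.drop (i-1)).length = S.length + 1 := by
          rw [List.length_drop]; omega
        have htake : (T.drop (i-1)).take (S.length + 1) = T.drop (i-1) := by
          rw [← hdl, List.take_length]
        have heq : T.drop (i-1) = L :=
          suffix_eq_of_length (List.drop_suffix _ _) hLsuf (by rw [hdl, hLlen])
        rw [htake, heq] at h4
        omega
    · have hIlt : i + S.length < T.length := by omega
      rcases h5 with h5 | h5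
      · exact hI h5
      have hRocc : (T.drop i).take (S.length + 1) = S ++ [c] := by
        obtain ⟨Z, hZ⟩ := prefix_append_singleton h1 (hc i h1 hIlt)
        rw [← hZ, List.take_left' (by simp)]
      rw [hRocc] at h5
      have hsub : (Finset.range T.length).filter (fun j => S <+: T.drop j) ⊆
          insert (T.length - S.length)
            ((Finset.range T.length).filter (fun j => S ++ [c] <+: T.drop j)) := by
        intro j hj
        rw [Finset.mem_filter, Finset.mem_range] at hj
        obtain ⟨hj1, hj2⟩ := hj
        rcases eq_or_ne j (T.length - S.length) with h | h
        · rw [h]; exact Finset.mem_insert_self _ _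
        · apply Finset.mem_insert_of_mem
          rw [Finset.mem_filter, Finset.mem_range]
          have hjlen : S.length ≤ T.length - j := by
            have := hj2.length_le; simpa using this
          have hjlt : j + S.length < T.length := by omega
          exact ⟨hj1, prefix_append_singleton hj2 (hc j hj2 hjlt)⟩
      have hocc2 : occ T S ≤ occ T (S ++ [c]) + 1 := by
        calc occ T S ≤ _ := Finset.card_le_card hsub
        _ ≤ occ T (S ++ [c]) + 1 := Finset.card_insert_le _ _
      have hoccS2 : occ T S = 2 := by unfold occ at *; omega
      have hmemi : i ∈ (Finset.range T.length).filter (fun j => S <+: T.drop j) := by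
        rw [Finset.mem_filter, Finset.mem_range]; exact ⟨hi, h1⟩
      have hmemn : T.length - S.length ∈
          (Finset.range T.length).filter (fun j => S <+: T.drop j) := by
        rw [Finset.mem_filter, Finset.mem_range]; exact ⟨by omega, hsufocc⟩
      have hne : i ≠ T.length - S.length := by omega
      have hsetS : (Finset.range T.length).filter (fun j => S <+: T.drop j)
          = {i, T.length - S.length} := by
        symm
        apply Finset.eq_of_subset_of_card_le
        · intro j hj
          simp only [Finset.mem_insert, Finset.mem_singleton] at hj
          rcases hj with rfl | rfl
          · exact hmemi
          · exact hmemn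
        · rw [show ((Finset.range T.length).filter (fun j => S <+: T.drop j)).card
              = occ T S from rfl, hoccS2]
          rw [Finset.card_insert_of_notMem (by simp [hne]), Finset.card_singleton]
      have hSsufS' : S <:+ S' := suffix_suffix_of_length_le ⟨X, hX⟩ hS'suf (le_of_lt hlen)
      obtain ⟨W, hW⟩ := hSsufS'
      have hWlen : W.length = δ := by
        have := congrArg List.length hW; simp at this; omega
      have hshift : ∀ j, j < T.length → S' <+: T.drop j →
          (j + δ ∈ (Finset.range T.length).filter (fun k => S <+: T.drop k)) := by
        intro j hj hpre
        have hlenle : S'.length ≤ T.length - j := by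
          have := hpre.length_le; simpa using this
        obtain ⟨Z, hZ⟩ := hpre
        have hdropeq : T.drop (j + δ) = S ++ Z := by
          rw [← List.drop_drop, ← hZ, ← hW,
            show W ++ S ++ Z = W ++ (S ++ Z) by simp, List.drop_left' hWlen]
        rw [Finset.mem_filter, Finset.mem_range]
        exact ⟨by omega, ⟨Z, hdropeq.symm⟩⟩
      have h1lt : 1 < ((Finset.range T.length).filter (fun j => S' <+: T.drop j)).card :=
        lt_of_lt_of_le one_lt_two hS'rep
      obtain ⟨j1, hj1, j2, hj2, hj12⟩ := Finset.one_lt_card.mp h1lt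
      rw [Finset.mem_filter, Finset.mem_range] at hj1 hj2
      have hm1 := hshift j1 hj1.1 hj1.2
      have hm2 := hshift j2 hj2.1 hj2.2
      rw [hsetS] at hm1 hm2
      simp only [Finset.mem_insert, Finset.mem_singleton] at hm1 hm2
      -- one of j1, j2 satisfies j + δ = i
      have hex : ∃ j, j < T.length ∧ S' <+: T.drop j ∧ j + δ = i := by
        rcases hm1 with hm1 | hm1
        · exact ⟨j1, hj1.1, hj1.2, hm1⟩
        · rcases hm2 with hm2 | hm2
          · exact ⟨j2, hj2.1, hj2.2, hm2⟩
          · omega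
      obtain ⟨j, hjlt, hjpre, hji⟩ := hex
      have hi0 : i ≠ 0 := by omega
      rcases h4 with h4 | h4
      · exact hi0 h4
      · obtain ⟨Z, hZ⟩ := hjpre
        have hdropeq : T.drop (i - 1) = L ++ Z := by
          have hsplit : S' = S'.take (δ - 1) ++ L := (List.take_append_drop _ _).symm
          have htlen : (S'.take (δ - 1)).length = δ - 1 := by
            rw [List.length_take]; omega
          rw [show i - 1 = j + (δ - 1) by omega, ← List.drop_drop, ← hZ,
            hsplit, show S'.take (δ-1) ++ L ++ Z = S'.take (δ-1) ++ (L ++ Z) by simp,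
            List.drop_left' htlen]
        have htake : (T.drop (i-1)).take (S.length + 1) = L := by
          rw [hdropeq, List.take_left' hLlen]
        rw [htake] at h4
        omega
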